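/- Let H be a compact convex subset of the plane, a, b ∈ H a diametral pair, c and d points of H on the two supporting lines of H parallel to the line ab (on opposite sides). Then the convex quadrilateral J = conv{a, c, b, d} satisfies area(J) ≥ area(H)/2. -/

import Mathlib

open scoped RealInnerProductSpace
open MeasureTheory
open Set


noncomputable def colMap (p q : ℝ × ℝ) : (ℝ × ℝ) →ₗ[ℝ] ℝ × ℝ where
  toFun v := v.1 • p + v.2 • q
  map_add' v w := by simp [add_smul]; abel
  map_smul' r v := by simp [mul_smul, smul_add]

lemma colMap_apply (p q : ℝ × ℝ) (v : ℝ × ℝ) : colMap p q v = v.1 • p + v.2 • q := rfl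

lemma colMap_det (p q : ℝ × ℝ) : LinearMap.det (colMap p q) = p.1 * q.2 - p.2 * q.1 := by
  rw [← LinearMap.det_toMatrix (Module.Basis.finTwoProd ℝ), Matrix.det_fin_two]
  simp [LinearMap.toMatrix_apply, colMap_apply, Module.Basis.finTwoProd_zero, Module.Basis.finTwoProd_one,
    Module.Basis.coe_finTwoProd_repr]
  ring

def S0 : Set (ℝ × ℝ) := {p | p.1 ∈ Ioo (0:ℝ) 1 ∧ p.2 ∈ Ioo 0 (1 - p.1)}

lemma vol_S0 : volume S0 = ENNReal.ofReal (1/2) := by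
  have h1 : S0 = regionBetween (fun _ => (0:ℝ)) (fun x => 1 - x) (Ioo 0 1) := rfl
  have hint : IntegrableOn (fun x : ℝ => 1 - x) (Ioo 0 1) := by
    apply (intervalIntegrable_iff_integrableOn_Ioo_of_le zero_le_one).mp
    exact (continuous_const.sub continuous_id).intervalIntegrable 0 1
  have h2 := volume_regionBetween_eq_integral (f := fun _ => (0:ℝ))
    (g := fun x => 1 - x) (s := Ioo 0 1) (μ := volume)
    (integrableOn_const (by simp) (by simp)) hint measurableSet_Ioo
    (fun x hx => by simpa using hx.2.le)
  rw [h1, Measure.volume_eq_prod, h2]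
  congr 1
  rw [← integral_Ioc_eq_integral_Ioo, ← intervalIntegral.integral_of_le zero_le_one]
  have heq : ((fun x : ℝ => 1 - x) - fun _ => (0:ℝ)) = fun y => 1 - y := by
    funext y; simp
  rw [heq]
  rw [intervalIntegral.integral_sub intervalIntegrable_const intervalIntegral.intervalIntegrable_id]
  simp [integral_id]
  norm_num

lemma combo_mem_convexHull {E : Type*} [AddCommGroup E] [Module ℝ E] {S : Set E} {p q r : E}
    (hp : p ∈ S) (hq : q ∈ S) (hr : r ∈ S) {x y : ℝ} (hx : 0 ≤ x) (hy : 0 ≤ y)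
    (hxy : x + y ≤ 1) : x • p + y • q + (1 - x - y) • r ∈ convexHull ℝ S := by
  have hC := convex_convexHull ℝ S
  have hpm := subset_convexHull ℝ S hp
  have hqm := subset_convexHull ℝ S hq
  have hrm := subset_convexHull ℝ S hr
  rcases eq_or_lt_of_le (add_nonneg hx hy) with h0 | h0
  · have hx0 : x = 0 := by linarith
    have hy0 : y = 0 := by linarith
    simpa [hx0, hy0] using hrm
  · set t := x + y with ht
    have hm : (x / t) • p + (y / t) • q ∈ convexHull ℝ S :=
      hC hpm hqm (div_nonneg hx h0.le) (div_nonneg hy h0.le) (by field_simp; exact ht.symm)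
    have hfin := hC hm hrm h0.le (by linarith : (0:ℝ) ≤ 1 - t) (by ring)
    have : t • ((x / t) • p + (y / t) • q) + (1 - t) • r
        = x • p + y • q + (1 - x - y) • r := by
      rw [smul_add, smul_smul, smul_smul, mul_div_cancel₀ _ h0.ne', mul_div_cancel₀ _ h0.ne']
      rw [ht]; ring_nf
    rwa [this] at hfin

lemma quad_lower (L sc hcc sd hdd : ℝ) (hL : 0 ≤ L) (hc0 : 0 ≤ hcc) (hd0 : hdd ≤ 0) :
    ENNReal.ofReal (L * (hcc - hdd) / 2) ≤
      volume (convexHull ℝ {((0:ℝ),(0:ℝ)), (sc, hcc), (L, 0), (sd, hdd)}) := by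
  set vs : Set (ℝ × ℝ) := {((0:ℝ),(0:ℝ)), (sc, hcc), (L, 0), (sd, hdd)} with hvs
  set Q := convexHull ℝ vs with hQ
  have hQm : MeasurableSet Q := by
    have : vs.Finite := by
      apply Set.Finite.insert; apply Set.Finite.insert; apply Set.Finite.insert
      exact Set.finite_singleton _
    exact ((this.isCompact_convexHull (𝕜 := ℝ)).isClosed).measurableSet
  have hA : MeasurableSet (Q ∩ {p : ℝ × ℝ | 0 < p.2}) :=
    hQm.inter ((isOpen_lt continuous_const continuous_snd).measurableSet)
  have hB : MeasurableSet (Q ∩ {p : ℝ × ℝ | p.2 < 0}) :=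
    hQm.inter ((isOpen_lt continuous_snd continuous_const).measurableSet)
  -- generic piece bound
  have piece : ∀ s h : ℝ, (s, h) ∈ vs → ∀ hsign : h ≠ 0,
      ENNReal.ofReal (L * |h| / 2) ≤ volume (Q ∩ {p : ℝ × ℝ | 0 < p.2 / h}) := by
    intro s h hmem hsign
    have himg : volume (colMap (L, 0) (s, h) '' S0) = ENNReal.ofReal (|L * h|) * volume S0 := by
      have := Measure.addHaar_image_linearMap (μ := volume) (colMap (L, 0) (s, h)) S0
      rw [this, colMap_det]; norm_num
    have hsub : colMap (L, 0) (s, h) '' S0 ⊆ Q ∩ {p : ℝ × ℝ | 0 < p.2 / h} := by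
      rintro _ ⟨⟨x, y⟩, ⟨hx, hy⟩, rfl⟩
      constructor
      · have := combo_mem_convexHull (p := ((L:ℝ), (0:ℝ))) (q := (s, h)) (r := ((0:ℝ),(0:ℝ)))
          (by simp [hvs]) hmem (by simp [hvs]) hx.1.le hy.1.le (by simp at hy ⊢; linarith [hy.2])
        simpa [colMap_apply, smul_zero] using this
      · have : (colMap (L, 0) (s, h) (x, y)).2 = y * h := by
          simp [colMap_apply]
        rw [Set.mem_setOf_eq, this, mul_div_assoc, div_self hsign, mul_one]
        exact hy.1
    calc ENNReal.ofReal (L * |h| / 2) = ENNReal.ofReal (|L * h|) * ENNReal.ofReal (1/2) := by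
          rw [← ENNReal.ofReal_mul (abs_nonneg _), abs_mul, abs_of_nonneg hL]
          ring_nf
      _ = volume (colMap (L, 0) (s, h) '' S0) := by rw [himg, vol_S0]
      _ ≤ _ := measure_mono hsub
  have hup : ENNReal.ofReal (L * hcc / 2) ≤ volume (Q ∩ {p : ℝ × ℝ | 0 < p.2}) := by
    rcases eq_or_lt_of_le hc0 with h0 | h0
    · simp [← h0]
    · have hpc := piece sc hcc (by simp [hvs]) h0.ne'
      rw [abs_of_pos h0] at hpc
      refine le_trans hpc (measure_mono (Set.inter_subset_inter_right _ ?_))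
      intro p hp
      simp only [Set.mem_setOf_eq] at hp ⊢
      rcases div_pos_iff.mp hp with h | h
      · exact h.1
      · linarith [h.2]
  have hdn : ENNReal.ofReal (L * (-hdd) / 2) ≤ volume (Q ∩ {p : ℝ × ℝ | p.2 < 0}) := by
    rcases eq_or_lt_of_le hd0 with h0 | h0
    · simp [h0]
    · have hpd := piece sd hdd (by simp [hvs]) h0.ne
      rw [abs_of_neg h0] at hpd
      refine le_trans hpd (measure_mono (Set.inter_subset_inter_right _ ?_))
      intro p hp
      simp only [Set.mem_setOf_eq] at hp ⊢
      rcases div_pos_iff.mp hp with h | h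
      · linarith [h.2]
      · exact h.1
  have hdisj : Disjoint (Q ∩ {p : ℝ × ℝ | 0 < p.2}) (Q ∩ {p : ℝ × ℝ | p.2 < 0}) := by
    rw [Set.disjoint_left]
    rintro p ⟨-, hp1⟩ ⟨-, hp2⟩
    simp only [Set.mem_setOf_eq] at hp1 hp2
    linarith
  have hsum : volume (Q ∩ {p : ℝ × ℝ | 0 < p.2}) + volume (Q ∩ {p : ℝ × ℝ | p.2 < 0})
      ≤ volume Q := by
    rw [← measure_union hdisj hB]
    exact measure_mono (Set.union_subset Set.inter_subset_left Set.inter_subset_left)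
  calc ENNReal.ofReal (L * (hcc - hdd) / 2)
      = ENNReal.ofReal (L * hcc / 2 + L * (-hdd) / 2) := by ring_nf
    _ = ENNReal.ofReal (L * hcc / 2) + ENNReal.ofReal (L * (-hdd) / 2) :=
        ENNReal.ofReal_add (by positivity) (by nlinarith)
    _ ≤ _ := le_trans (add_le_add hup hdn) hsum


set_option maxHeartbeats 1000000 in
/-- Let `H` be compact convex in the plane with diametral pair `a, b`, and let
`c, d ∈ H` lie on the two supporting lines of `H` parallel to line `ab` (on
opposite sides); here `w` is a nonzero vector perpendicular to `b - a`.  Then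
the inscribed quadrilateral `J = conv{a, c, b, d}` has area at least half the
area of `H`. -/
theorem inscribed_quadrilateral_area (H : Set (EuclideanSpace ℝ (Fin 2)))
    (hHc : IsCompact H) (hHconv : Convex ℝ H)
    (a b c d : EuclideanSpace ℝ (Fin 2))
    (ha : a ∈ H) (hb : b ∈ H) (hc : c ∈ H) (hd : d ∈ H)
    (hdiam : dist a b = Metric.diam H)
    (w : EuclideanSpace ℝ (Fin 2)) (hw0 : w ≠ 0) (hw : ⟪w, b - a⟫ = 0)
    (hcsup : ∀ y ∈ H, ⟪y, w⟫ ≤ ⟪c, w⟫)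
    (hdsup : ∀ y ∈ H, ⟪d, w⟫ ≤ ⟪y, w⟫) :
    (volume H).toReal / 2 ≤ (volume (convexHull ℝ {a, c, b, d})).toReal := by
  rcases eq_or_ne a b with hab | hab
  · -- degenerate: H is a single point
    have hH1 : H ⊆ {a} := by
      intro x hx
      have h1 : dist x a ≤ Metric.diam H := Metric.dist_le_diam_of_mem hHc.isBounded hx ha
      rw [← hdiam, hab, dist_self] at h1
      have h2 := le_antisymm h1 dist_nonneg
      exact Set.mem_singleton_iff.mpr ((dist_eq_zero.mp h2).trans hab.symm)
    have : volume H ≤ volume ({a} : Set (EuclideanSpace ℝ (Fin 2))) := measure_mono hH1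
    rw [measure_singleton] at this
    have h0 : volume H = 0 := le_antisymm this zero_le
    rw [h0]
    simp [ENNReal.toReal_nonneg]
  · -- main case
    set u : EuclideanSpace ℝ (Fin 2) := b - a with hu
    have hune : u ≠ 0 := sub_ne_zero.mpr (Ne.symm hab)
    have hLpos : (0:ℝ) < ‖u‖ := norm_pos_iff.mpr hune
    have hWpos : (0:ℝ) < ‖w‖ := norm_pos_iff.mpr hw0
    set v₁ : EuclideanSpace ℝ (Fin 2) := ‖u‖⁻¹ • u with hv₁
    set v₂ : EuclideanSpace ℝ (Fin 2) := ‖w‖⁻¹ • w with hv₂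
    have hon : Orthonormal ℝ ![v₁, v₂] := by
      constructor
      · intro i
        fin_cases i <;>
          simp [hv₁, hv₂, norm_smul, abs_of_pos, inv_mul_cancel₀ hLpos.ne',
            inv_mul_cancel₀ hWpos.ne', abs_inv, abs_norm]
      · intro i j hij
        have hwu : ⟪u, w⟫ = 0 := by rw [real_inner_comm]; exact hw
        have h12 : ⟪v₁, v₂⟫ = 0 := by
          rw [hv₁, hv₂, real_inner_smul_left, real_inner_smul_right, hwu, mul_zero, mul_zero]
        have h21 : ⟪v₂, v₁⟫ = 0 := by rw [real_inner_comm]; exact h12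
        fin_cases i <;> fin_cases j <;> simp_all
    -- orthonormal basis
    have hcard : Fintype.card (Fin 2) = Module.finrank ℝ (EuclideanSpace ℝ (Fin 2)) := by
      simp [finrank_euclideanSpace_fin]
    let bas := basisOfLinearIndependentOfCardEqFinrank hon.linearIndependent hcard
    have hbas : ⇑bas = ![v₁, v₂] := coe_basisOfLinearIndependentOfCardEqFinrank _ _
    let B := bas.toOrthonormalBasis (by rwa [hbas])
    have hB : ⇑B = ![v₁, v₂] := by rw [Module.Basis.coe_toOrthonormalBasis, hbas]
    set F : EuclideanSpace ℝ (Fin 2) → ℝ × ℝ :=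
      fun x => (⟪v₁, x - a⟫, ⟪v₂, x - a⟫) with hF
    have hFeq : F = (MeasurableEquiv.finTwoArrow ∘ ⇑(MeasurableEquiv.toLp 2 (Fin 2 → ℝ)).symm ∘
        ⇑B.repr ∘ (fun x => x - a)) := by
      funext x
      have h0 : B.repr (x - a) 0 = ⟪v₁, x - a⟫ := by
        rw [B.repr_apply_apply, hB]; rfl
      have h1 : B.repr (x - a) 1 = ⟪v₂, x - a⟫ := by
        rw [B.repr_apply_apply, hB]; rfl
      simp only [hF, Function.comp_apply]
      rw [← h0, ← h1]
      rfl
    have hFmp : MeasurePreserving F volume volume := by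
      rw [hFeq]
      exact ((volume_preserving_finTwoArrow ℝ).comp
        ((EuclideanSpace.volume_preserving_symm_measurableEquiv_toLp (Fin 2)).comp
          (B.measurePreserving_repr.comp (measurePreserving_sub_right volume a))))
    have hFinj : Function.Injective F := by
      rw [hFeq]
      exact (MeasurableEquiv.finTwoArrow.injective.comp
        ((MeasurableEquiv.toLp 2 (Fin 2 → ℝ)).symm.injective.comp
          (B.repr.injective.comp (fun x y h => by simpa using h))))
    set L := ‖u‖ with hL
    set sc := ⟪v₁, c - a⟫ with hsc
    set hcc := ⟪v₂, c - a⟫ with hhcc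
    set sd := ⟪v₁, d - a⟫ with hsd
    set hdd := ⟪v₂, d - a⟫ with hhdd
    have hv2inner : ∀ x : EuclideanSpace ℝ (Fin 2),
        ⟪v₂, x - a⟫ = ‖w‖⁻¹ * (⟪x, w⟫ - ⟪a, w⟫) := by
      intro x
      rw [hv₂, real_inner_smul_left, inner_sub_right, real_inner_comm w x, real_inner_comm w a]
    have hwinv : (0:ℝ) ≤ ‖w‖⁻¹ := by positivity
    have hcc0 : 0 ≤ hcc := by
      rw [hhcc, hv2inner]
      exact mul_nonneg hwinv (sub_nonneg.mpr (hcsup a ha))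
    have hdd0 : hdd ≤ 0 := by
      rw [hhdd, hv2inner]
      exact mul_nonpos_of_nonneg_of_nonpos hwinv (sub_nonpos.mpr (hdsup a ha))
    have hcoord2 : ∀ x ∈ H, hdd ≤ ⟪v₂, x - a⟫ ∧ ⟪v₂, x - a⟫ ≤ hcc := by
      intro x hx
      rw [hhdd, hhcc, hv2inner, hv2inner, hv2inner]
      refine ⟨mul_le_mul_of_nonneg_left ?_ hwinv, mul_le_mul_of_nonneg_left ?_ hwinv⟩
      · have := hdsup x hx; linarith
      · have := hcsup x hx; linarith
    have hcoord1 : ∀ x ∈ H, 0 ≤ ⟪v₁, x - a⟫ ∧ ⟪v₁, x - a⟫ ≤ L := by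
      intro x hx
      have hxa : ‖x - a‖ ≤ ‖u‖ := by
        have h1 : dist x a ≤ Metric.diam H := Metric.dist_le_diam_of_mem hHc.isBounded hx ha
        rw [← hdiam] at h1
        rw [dist_eq_norm, dist_eq_norm] at h1
        calc ‖x - a‖ ≤ ‖a - b‖ := h1
          _ = ‖u‖ := by rw [hu, norm_sub_rev]
      have hxb : ‖x - b‖ ≤ ‖u‖ := by
        have h1 : dist x b ≤ Metric.diam H := Metric.dist_le_diam_of_mem hHc.isBounded hx hb
        rw [← hdiam] at h1
        rw [dist_eq_norm, dist_eq_norm] at h1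
        calc ‖x - b‖ ≤ ‖a - b‖ := h1
          _ = ‖u‖ := by rw [hu, norm_sub_rev]
      have hkey : ‖(x - a) - u‖ ^ 2 ≤ ‖u‖ ^ 2 := by
        have : (x - a) - u = x - b := by rw [hu]; abel
        rw [this]
        exact pow_le_pow_left₀ (norm_nonneg _) hxb 2
      have hexp := norm_sub_sq_real (x - a) u
      have hinner_nonneg : 0 ≤ ⟪x - a, u⟫ := by
        have hsq := sq_nonneg ‖x - a‖
        linarith
      have hCS : ⟪u, x - a⟫ ≤ ‖u‖ * ‖x - a‖ := real_inner_le_norm u (x - a)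
      have huxa : ⟪v₁, x - a⟫ = ‖u‖⁻¹ * ⟪u, x - a⟫ := by
        rw [hv₁, real_inner_smul_left]
      have hcomm : ⟪u, x - a⟫ = ⟪x - a, u⟫ := real_inner_comm _ _
      constructor
      · rw [huxa, hcomm]
        positivity
      · rw [huxa, hL]
        have h4 : ⟪u, x - a⟫ ≤ ‖u‖ * ‖u‖ :=
          hCS.trans (mul_le_mul_of_nonneg_left hxa (norm_nonneg u))
        calc ‖u‖⁻¹ * ⟪u, x - a⟫ ≤ ‖u‖⁻¹ * (‖u‖ * ‖u‖) :=
              mul_le_mul_of_nonneg_left h4 (by positivity)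
          _ = ‖u‖ := by field_simp
    -- volume of H bounded by rectangle
    have hHvol : volume H ≤ ENNReal.ofReal (L * (hcc - hdd)) := by
      have hHsub : H ⊆ F ⁻¹' (Set.Icc 0 L ×ˢ Set.Icc hdd hcc) := by
        intro x hx
        simp only [Set.mem_preimage, hF, Set.mem_prod, Set.mem_Icc]
        exact ⟨hcoord1 x hx, hcoord2 x hx⟩
      calc volume H ≤ volume (F ⁻¹' (Set.Icc 0 L ×ˢ Set.Icc hdd hcc)) := measure_mono hHsub
        _ = volume (Set.Icc 0 L ×ˢ Set.Icc hdd hcc) :=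
            hFmp.measure_preimage (measurableSet_Icc.prod measurableSet_Icc).nullMeasurableSet
        _ = ENNReal.ofReal (L - 0) * ENNReal.ofReal (hcc - hdd) := by
            rw [Measure.volume_eq_prod, Measure.prod_prod, Real.volume_Icc, Real.volume_Icc]
        _ = ENNReal.ofReal (L * (hcc - hdd)) := by
            rw [← ENNReal.ofReal_mul (by linarith [hLpos] : (0:ℝ) ≤ L - 0)]
            ring_nf
    -- F values at the four points
    have hFa : F a = ((0:ℝ), (0:ℝ)) := by
      simp [hF, sub_self]
    have hFb : F b = (L, (0:ℝ)) := by
      have h1 : ⟪v₁, b - a⟫ = L := by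
        rw [hv₁, real_inner_smul_left, ← hu, real_inner_self_eq_norm_mul_norm, hL]
        field_simp
      have h2 : ⟪v₂, b - a⟫ = 0 := by
        rw [hv₂, real_inner_smul_left, ← hu, hw, mul_zero]
      show (⟪v₁, b - a⟫, ⟪v₂, b - a⟫) = (L, (0:ℝ))
      rw [h1, h2]
    -- affine structure of F
    let Flin : EuclideanSpace ℝ (Fin 2) →ₗ[ℝ] ℝ × ℝ :=
      LinearMap.prod ((innerSL ℝ v₁).toLinearMap) ((innerSL ℝ v₂).toLinearMap)
    let Faff : EuclideanSpace ℝ (Fin 2) →ᵃ[ℝ] ℝ × ℝ :=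
      { toFun := F
        linear := Flin
        map_vadd' := by
          intro p v
          show F (v + p) = (⟪v₁, v⟫, ⟪v₂, v⟫) + F p
          simp only [hF, Prod.mk_add_mk]
          have e1 : v + p - a = v + (p - a) := by abel
          rw [e1, inner_add_right, inner_add_right] }
    have himg : F '' (convexHull ℝ {a, c, b, d}) = convexHull ℝ (F '' {a, c, b, d}) :=
      Faff.image_convexHull _
    have himgpts : F '' ({a, c, b, d} : Set (EuclideanSpace ℝ (Fin 2)))
        = {((0:ℝ),(0:ℝ)), (sc, hcc), (L, 0), (sd, hdd)} := by
      rw [Set.image_insert_eq, Set.image_insert_eq, Set.image_insert_eq, Set.image_singleton,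
        hFa, hFb]
    set Q : Set (ℝ × ℝ) := convexHull ℝ {((0:ℝ),(0:ℝ)), (sc, hcc), (L, 0), (sd, hdd)} with hQdef
    have hQfinite : ({((0:ℝ),(0:ℝ)), (sc, hcc), (L, 0), (sd, hdd)} : Set (ℝ × ℝ)).Finite := by
      apply Set.Finite.insert; apply Set.Finite.insert; apply Set.Finite.insert
      exact Set.finite_singleton _
    have hQm : MeasurableSet Q := (hQfinite.isCompact_convexHull (𝕜 := ℝ)).isClosed.measurableSet
    have hJ : convexHull ℝ {a, c, b, d} = F ⁻¹' Q := by
      rw [hQdef, ← himgpts, ← himg, Set.preimage_image_eq _ hFinj]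
    have hJvol : volume (convexHull ℝ ({a, c, b, d} : Set (EuclideanSpace ℝ (Fin 2)))) = volume Q := by
      rw [hJ]
      exact hFmp.measure_preimage hQm.nullMeasurableSet
    have hQlow := quad_lower L sc hcc sd hdd hLpos.le hcc0 hdd0
    have hQfin : volume Q ≠ ⊤ := (hQfinite.isCompact_convexHull (𝕜 := ℝ)).measure_lt_top.ne
    rw [hJvol]
    have h1 : (volume H).toReal ≤ L * (hcc - hdd) :=
      ENNReal.toReal_le_of_le_ofReal (by nlinarith) hHvol
    have h2 : L * (hcc - hdd) / 2 ≤ (volume Q).toReal := by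
      have h3 := ENNReal.toReal_mono hQfin hQlow
      rwa [ENNReal.toReal_ofReal (by nlinarith)] at h3
    linarith
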